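/- Let m > 0, let I ⊆ ℝ be an open interval, and let t, r, φ : I → ℝ be twice differentiable with r(s) > 2m for all s ∈ I, satisfying the equatorial Schwarzschild geodesic equations: t''= −(2m/(r²·W))·r'·t', φ'' = −(2/r)·r'·φ', and r'' = −(m·W/r²)·t'² + (m/(r²·W))·r'² + (r − 2m)·φ'², where W := 1 − 2m/r. Suppose in addition that −W·t'² + r'²/W + r²·φ'² = 0 on I (the null condition) and that r(s₀) = 3m and r'(s₀) = 0 for some s₀ ∈ I. Then r(s) = 3m for all s ∈ I. -/

import Mathlib

open Set Real

/-- The defining property of the Schwarzschild photon sphere: a null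
equatorial geodesic that is initially tangent to `{r = 3m}` (i.e. `r(s₀) = 3m`
and `r'(s₀) = 0`) stays on `{r = 3m}`. -/
theorem schwarzschild_photon_sphere_invariance
    (m : ℝ) (hm : 0 < m)
    (I : Set ℝ) (hIopen : IsOpen I) (hIconn : I.OrdConnected)
    (t r φ : ℝ → ℝ)
    (ht : ∀ s ∈ I, DifferentiableAt ℝ t s)
    (ht' : ∀ s ∈ I, DifferentiableAt ℝ (deriv t) s)
    (hr : ∀ s ∈ I, DifferentiableAt ℝ r s)
    (hr' : ∀ s ∈ I, DifferentiableAt ℝ (deriv r) s)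
    (hφ : ∀ s ∈ I, DifferentiableAt ℝ φ s)
    (hφ' : ∀ s ∈ I, DifferentiableAt ℝ (deriv φ) s)
    (hr2m : ∀ s ∈ I, r s > 2 * m)
    (W : ℝ → ℝ) (hW : ∀ s : ℝ, W s = 1 - 2 * m / r s)
    (geot : ∀ s ∈ I, deriv (deriv t) s =
      -(2 * m / (r s ^ 2 * W s)) * deriv r s * deriv t s)
    (geoφ : ∀ s ∈ I, deriv (deriv φ) s =
      -(2 / r s) * deriv r s * deriv φ s)
    (geor : ∀ s ∈ I, deriv (deriv r) s =
      -(m * W s / r s ^ 2) * deriv t s ^ 2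
        + (m / (r s ^ 2 * W s)) * deriv r s ^ 2
        + (r s - 2 * m) * deriv φ s ^ 2)
    (hnull : ∀ s ∈ I,
      -W s * deriv t s ^ 2 + deriv r s ^ 2 / W s + r s ^ 2 * deriv φ s ^ 2 = 0)
    (s₀ : ℝ) (hs₀ : s₀ ∈ I) (hr₀ : r s₀ = 3 * m) (hr'₀ : deriv r s₀ = 0) :
    ∀ s ∈ I, r s = 3 * m := by
  have hrpos : ∀ s ∈ I, (0:ℝ) < r s := fun s hs => lt_trans (by linarith) (hr2m s hs)
  have hWpos : ∀ s ∈ I, 0 < W s := by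
    intro s hs
    rw [hW]
    have h0 := hrpos s hs
    have h1 := hr2m s hs
    rw [sub_pos, div_lt_one h0]
    linarith
  -- key reduced ODE: r'' = (r - 3m) * φ'^2
  have key : ∀ s ∈ I, deriv (deriv r) s = (r s - 3*m) * deriv φ s ^ 2 := by
    intro s hs
    have h1 := geor s hs
    have h2 := hnull s hs
    have hW0 : W s ≠ 0 := ne_of_gt (hWpos s hs)
    have hr0 : r s ≠ 0 := ne_of_gt (hrpos s hs)
    have h2' : deriv r s ^ 2
        = W s ^ 2 * deriv t s ^ 2 - W s * r s ^ 2 * deriv φ s ^ 2 := by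
      field_simp at h2
      linarith
    rw [h1, h2']
    field_simp
    ring
  intro s₁ hs₁
  -- choose a compact interval [a,b] ⊆ I containing s₀ and s₁ in its interior
  obtain ⟨ε₀, hε₀, hball₀⟩ := Metric.isOpen_iff.mp hIopen s₀ hs₀
  obtain ⟨ε₁, hε₁, hball₁⟩ := Metric.isOpen_iff.mp hIopen s₁ hs₁
  set ε : ℝ := min ε₀ ε₁ / 2 with hε
  have hεpos : 0 < ε := by positivity
  have hεε₀ : ε < ε₀ := by
    have := min_le_left ε₀ ε₁
    rw [hε]; linarith
  have hεε₁ : ε < ε₁ := by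
    have := min_le_right ε₀ ε₁
    rw [hε]; linarith
  set a : ℝ := min s₀ s₁ - ε with ha
  set b : ℝ := max s₀ s₁ + ε with hb
  have haI : a ∈ I := by
    rcases le_total s₀ s₁ with h | h
    · apply hball₀
      rw [Metric.mem_ball, Real.dist_eq, ha, min_eq_left h, abs_of_nonpos (by linarith)]
      linarith
    · apply hball₁
      rw [Metric.mem_ball, Real.dist_eq, ha, min_eq_right h, abs_of_nonpos (by linarith)]
      linarith
  have hbI : b ∈ I := by
    rcases le_total s₀ s₁ with h | h
    · apply hball₁
      rw [Metric.mem_ball, Real.dist_eq, hb, max_eq_right h, abs_of_nonneg (by linarith)]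
      linarith
    · apply hball₀
      rw [Metric.mem_ball, Real.dist_eq, hb, max_eq_left h, abs_of_nonneg (by linarith)]
      linarith
  have hIccI : Icc a b ⊆ I := hIconn.out haI hbI
  have hs₀ab : s₀ ∈ Ioo a b := by
    rw [mem_Ioo]
    refine ⟨?_, ?_⟩
    · rw [ha]; have := min_le_left s₀ s₁; linarith
    · rw [hb]; have := le_max_left s₀ s₁; linarith
  have hs₁ab : s₁ ∈ Icc a b := by
    rw [mem_Icc]
    refine ⟨?_, ?_⟩
    · rw [ha]; have := min_le_right s₀ s₁; linarith
    · rw [hb]; have := le_max_right s₀ s₁; linarith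
  -- bound for φ'^2 on [a,b]
  have hφ'cont : ContinuousOn (fun τ => deriv φ τ ^ 2) (Icc a b) :=
    fun τ hτ => (((hφ' τ (hIccI hτ)).continuousAt).pow 2).continuousWithinAt
  obtain ⟨B, hB⟩ := (isCompact_Icc (a := a) (b := b)).exists_bound_of_continuousOn hφ'cont
  have hB0 : (0:ℝ) ≤ B := le_trans (norm_nonneg _) (hB s₁ hs₁ab)
  -- the vector field
  set c : ℝ → ℝ := fun τ => if τ ∈ Icc a b then deriv φ τ ^ 2 else 0 with hc
  set v : ℝ → ℝ × ℝ → ℝ × ℝ := fun τ x => (x.2, c τ * x.1) with hv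
  have hcB : ∀ τ, |c τ| ≤ B := by
    intro τ
    simp only [hc]
    split_ifs with h
    · rw [abs_of_nonneg (sq_nonneg _)]
      simpa [Real.norm_eq_abs, abs_of_nonneg (sq_nonneg (deriv φ τ))] using hB τ h
    · simpa using hB0
  set K : NNReal := Real.toNNReal (max 1 B) with hK
  have hKcoe : (K : ℝ) = max 1 B := Real.coe_toNNReal _ (le_trans zero_le_one (le_max_left 1 B))
  have hlip : ∀ τ, LipschitzWith K (v τ) := by
    intro τ
    apply LipschitzWith.of_dist_le_mul
    intro x y
    rw [Prod.dist_eq, Prod.dist_eq, hKcoe]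
    simp only [hv, Real.dist_eq]
    rw [max_le_iff]
    constructor
    · calc |x.2 - y.2| ≤ max |x.1 - y.1| |x.2 - y.2| := le_max_right _ _
        _ ≤ max 1 B * max |x.1 - y.1| |x.2 - y.2| :=
          le_mul_of_one_le_left (le_max_of_le_left (abs_nonneg _)) (le_max_left _ _)
    · calc |c τ * x.1 - c τ * y.1| = |c τ| * |x.1 - y.1| := by
            rw [← abs_mul]; ring_nf
        _ ≤ B * max |x.1 - y.1| |x.2 - y.2| :=
            mul_le_mul (hcB τ) (le_max_left _ _) (abs_nonneg _) hB0
        _ ≤ max 1 B * max |x.1 - y.1| |x.2 - y.2| :=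
            mul_le_mul_of_nonneg_right (le_max_right _ _)
              (le_max_of_le_left (abs_nonneg _))
  set f : ℝ → ℝ × ℝ := fun τ => (r τ - 3*m, deriv r τ) with hf
  set g : ℝ → ℝ × ℝ := fun _ => ((0:ℝ), (0:ℝ)) with hg
  have hfderiv : ∀ τ ∈ Ioo a b, HasDerivAt f (v τ (f τ)) τ := by
    intro τ hτ
    have hτI : τ ∈ I := hIccI (Ioo_subset_Icc_self hτ)
    have h1 : HasDerivAt (fun τ => r τ - 3*m) (deriv r τ) τ :=
      ((hr τ hτI).hasDerivAt).sub_const _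
    have h2 : HasDerivAt (deriv r) (deriv (deriv r) τ) τ := (hr' τ hτI).hasDerivAt
    have hveq : v τ (f τ) = (deriv r τ, deriv (deriv r) τ) := by
      simp only [hv, hf, hc]
      rw [if_pos (Ioo_subset_Icc_self hτ), key τ hτI]
      ring_nf
    rw [hveq]
    exact h1.prodMk h2
  have hgderiv : ∀ τ ∈ Ioo a b, HasDerivAt g (v τ (g τ)) τ := by
    intro τ hτ
    have : v τ (g τ) = ((0:ℝ), (0:ℝ)) := by simp [hv, hg]
    rw [this]
    exact hasDerivAt_const _ _
  have hfcont : ContinuousOn f (Icc a b) := by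
    intro τ hτ
    have hτI : τ ∈ I := hIccI hτ
    exact (((hr τ hτI).continuousAt.sub continuousAt_const).prodMk
      (hr' τ hτI).continuousAt).continuousWithinAt
  have heq : f s₀ = g s₀ := by simp [hf, hg, hr₀, hr'₀]
  have hEq : EqOn f g (Icc a b) :=
    ODE_solution_unique_of_mem_Icc (fun τ _ => (hlip τ).lipschitzOnWith (s := univ))
      hs₀ab hfcont hfderiv (fun _ _ => trivial) (continuousOn_const)
      hgderiv (fun _ _ => trivial) heq
  have := hEq hs₁ab
  have h1 : r s₁ - 3*m = 0 := congrArg Prod.fst this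
  linarith
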